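/- Let L : ℝ^p → ℝ be twice continuously differentiable with ‖∇L(θ)‖₂ ≤ B and ‖∇²L(θ)‖₂ ≤ B̄ for all θ ∈ ℝ^p, and let θ̂ be a global minimizer of L. Let Θ₀ ⊆ ℝ^p be a convex set containing θ̂ on which ∇²L(θ) is positive definite and which satisfies τ₀-Hessian-stability with some τ₀ ≥ 1, and let the stepsize satisfy 0 < η ≤ 1/(2τ₀). Let θ^{(0)}, …, θ^{(K)} be damped noisy Newton iterates θ^{(k+1)} = θ^{(k)} − η[∇²L(θ^{(k)})]⁻¹∇L(θ^{(k)}) + ηN_k, with ‖N_k‖₂ ≤ ε for all k < K, and suppose θ^{(k)} ∈ Θ₀ for all 0 ≤ k ≤ K. Then L(θ^{(K)}) − L(θ̂) ≤ (1 − η/τ₀)^K (L(θ^{(0)}) − L(θ̂)) + (τ₀/η)(ηBε + η²B̄τ₀ε²). -/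

import Mathlib

open scoped RealInnerProductSpace

section Aux

lemma aux_taylor_one (φ dφ ddφ : ℝ → ℝ) (hφ : ∀ t, HasDerivAt φ (dφ t) t)
    (hdφ : ∀ t, HasDerivAt dφ (ddφ t) t) {M : ℝ}
    (hM : ∀ t ∈ Set.Icc (0:ℝ) 1, ddφ t ≤ M) : φ 1 ≤ φ 0 + dφ 0 + M / 2 := by
  have h1 : ∀ t ∈ Set.Icc (0:ℝ) 1, dφ t ≤ dφ 0 + M * t := by
    intro t ht
    set ψ : ℝ → ℝ := fun t => dφ t - dφ 0 - M * t with hψ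
    have hd : ∀ s, HasDerivAt ψ (ddφ s - M) s := by
      intro s
      exact (((hdφ s).sub_const (dφ 0)).sub ((hasDerivAt_id s).const_mul M)).congr_deriv (by ring)
    have hanti : AntitoneOn ψ (Set.Icc 0 1) := by
      apply antitoneOn_of_deriv_nonpos (convex_Icc 0 1)
      · exact fun s _ => ((hd s).continuousAt).continuousWithinAt
      · exact fun s _ => ((hd s).differentiableAt).differentiableWithinAt
      · intro s hs
        rw [(hd s).deriv]
        have : s ∈ Set.Icc (0:ℝ) 1 := interior_subset hs
        linarith [hM s this]
    have := hanti (Set.left_mem_Icc.2 one_pos.le) ht ht.1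
    simp only [hψ] at this
    linarith
  set ψ : ℝ → ℝ := fun t => φ t - φ 0 - dφ 0 * t - M * t ^ 2 / 2 with hψ
  have hd : ∀ s, HasDerivAt ψ (dφ s - dφ 0 - M * s) s := by
    intro s
    have h2 : HasDerivAt (fun t : ℝ => M * t ^ 2 / 2) (M * s) s := by
      have := ((hasDerivAt_pow 2 s).const_mul M).div_const 2
      simpa using this.congr_deriv (by ring)
    exact ((((hφ s).sub_const (φ 0)).sub ((hasDerivAt_id s).const_mul (dφ 0))).sub h2).congr_deriv (by ring)
  have hanti : AntitoneOn ψ (Set.Icc 0 1) := by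
    apply antitoneOn_of_deriv_nonpos (convex_Icc 0 1)
    · exact fun s _ => ((hd s).continuousAt).continuousWithinAt
    · exact fun s _ => ((hd s).differentiableAt).differentiableWithinAt
    · intro s hs
      rw [(hd s).deriv]
      have := h1 s (interior_subset hs)
      linarith
  have := hanti (Set.left_mem_Icc.2 one_pos.le) (Set.right_mem_Icc.2 one_pos.le) one_pos.le
  simp only [hψ] at this
  nlinarith [this]

variable {p : ℕ} (L : EuclideanSpace ℝ (Fin p) → ℝ)
  (H : EuclideanSpace ℝ (Fin p) → (EuclideanSpace ℝ (Fin p) →L[ℝ] EuclideanSpace ℝ (Fin p)))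

lemma aux_curve_deriv (hC2 : ContDiff ℝ 2 L) (θ Δ : EuclideanSpace ℝ (Fin p)) (t : ℝ) :
    HasDerivAt (fun s => L (θ + s • Δ)) ⟪gradient L (θ + t • Δ), Δ⟫ t := by
  have hc : HasDerivAt (fun s : ℝ => θ + s • Δ) Δ t := by
    simpa using ((hasDerivAt_id t).smul_const Δ).const_add θ
  have hg : HasGradientAt L (gradient L (θ + t • Δ)) (θ + t • Δ) :=
    (hC2.differentiable (by norm_num) _).hasGradientAt
  have := hg.hasFDerivAt.comp_hasDerivAt t hc
  exact this.congr_deriv (by rw [InnerProductSpace.toDual_apply_apply])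

lemma aux_curve_deriv2 (hH : ∀ x, HasFDerivAt (gradient L) (H x) x)
    (θ Δ : EuclideanSpace ℝ (Fin p)) (t : ℝ) :
    HasDerivAt (fun s => ⟪gradient L (θ + s • Δ), Δ⟫) ⟪H (θ + t • Δ) Δ, Δ⟫ t := by
  have hc : HasDerivAt (fun s : ℝ => θ + s • Δ) Δ t := by
    simpa using ((hasDerivAt_id t).smul_const Δ).const_add θ
  have hgc : HasDerivAt (fun s : ℝ => gradient L (θ + s • Δ)) (H (θ + t • Δ) Δ) t :=
    (hH _).comp_hasDerivAt t hc
  have := hgc.inner ℝ (hasDerivAt_const t Δ)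
  simpa using this

lemma aux_hess_symm (hC2 : ContDiff ℝ 2 L) (hH : ∀ x, HasFDerivAt (gradient L) (H x) x)
    (x u w : EuclideanSpace ℝ (Fin p)) : ⟪H x u, w⟫ = ⟪H x w, u⟫ := by
  have h1 : ∀ y, HasFDerivAt L (innerSL ℝ (gradient L y)) y := by
    intro y
    have hg : HasGradientAt L (gradient L y) y :=
      (hC2.differentiable (by norm_num) _).hasGradientAt
    have := hg.hasFDerivAt
    refine this.congr_fderiv ?_
    ext z
    simp [InnerProductSpace.toDual_apply_apply]
  have h2 : HasFDerivAt (fun y => innerSL ℝ (gradient L y)) ((innerSL ℝ).comp (H x)) x :=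
    (innerSL ℝ).hasFDerivAt.comp x (hH x)
  have := second_derivative_symmetric h1 h2 u w
  simpa using this

lemma aux_isUnit_of_inj (A : EuclideanSpace ℝ (Fin p) →L[ℝ] EuclideanSpace ℝ (Fin p))
    (hinj : Function.Injective A) : IsUnit A := by
  have hsurj : Function.Surjective A :=
    (LinearMap.injective_iff_surjective
      (f := (A : EuclideanSpace ℝ (Fin p) →ₗ[ℝ] EuclideanSpace ℝ (Fin p)))).mp hinj
  let e := ContinuousLinearEquiv.ofBijective A ((LinearMap.ker_eq_bot (f := (A : EuclideanSpace ℝ (Fin p) →ₗ[ℝ] EuclideanSpace ℝ (Fin p)))).mpr hinj)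
    (LinearMap.range_eq_top.mpr hsurj)
  refine ⟨⟨A, (e.symm : _ →L[ℝ] _), ?_, ?_⟩, rfl⟩
  · exact ContinuousLinearMap.ext fun x => e.apply_symm_apply x
  · exact ContinuousLinearMap.ext fun x => e.symm_apply_apply x

lemma aux_seg_upper (hC2 : ContDiff ℝ 2 L) (hH : ∀ x, HasFDerivAt (gradient L) (H x) x)
    {τ₀ : ℝ} (hτ₀ : 1 ≤ τ₀) {Θ₀ : Set (EuclideanSpace ℝ (Fin p))} (hconv : Convex ℝ Θ₀)
    (hPSD : ∀ θ ∈ Θ₀, ∀ u : EuclideanSpace ℝ (Fin p), 0 ≤ ⟪H θ u, u⟫)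
    (hstab : ∀ θ₁ ∈ Θ₀, ∀ θ₂ ∈ Θ₀,
      ⟪θ₁ - θ₂, H θ₂ (θ₁ - θ₂)⟫ ≤ τ₀ * ⟪θ₁ - θ₂, H θ₁ (θ₁ - θ₂)⟫)
    (x x' : EuclideanSpace ℝ (Fin p)) (hx : x ∈ Θ₀) (hx' : x' ∈ Θ₀) :
    L x' ≤ L x + ⟪gradient L x, x' - x⟫ + τ₀ * ⟪H x (x' - x), x' - x⟫ / 2 := by
  set Δ := x' - x with hΔ
  have hmem : ∀ t ∈ Set.Icc (0:ℝ) 1, x + t • Δ ∈ Θ₀ := by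
    intro t ht
    have := hconv hx hx' (by linarith [ht.2] : (0:ℝ) ≤ 1 - t) ht.1 (by ring)
    convert this using 1
    simp only [hΔ, smul_sub]
    module
  have hM : ∀ t ∈ Set.Icc (0:ℝ) 1, ⟪H (x + t • Δ) Δ, Δ⟫ ≤ τ₀ * ⟪H x Δ, Δ⟫ := by
    intro t ht
    rcases eq_or_lt_of_le ht.1 with h0 | h0
    · have := hPSD x hx Δ
      rw [← h0]
      simp only [zero_smul, add_zero]
      nlinarith
    · have hs := hstab x hx (x + t • Δ) (hmem t ht)
      have he : x - (x + t • Δ) = (-t) • Δ := by module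
      rw [he] at hs
      simp only [map_smul, real_inner_smul_left, real_inner_smul_right, smul_smul] at hs
      have ht2 : (0:ℝ) < t * t := mul_pos h0 h0
      have h1 : ⟪Δ, H (x + t • Δ) Δ⟫ ≤ τ₀ * ⟪Δ, H x Δ⟫ := by nlinarith
      have e1 : ⟪H (x + t • Δ) Δ, Δ⟫ = ⟪Δ, H (x + t • Δ) Δ⟫ := real_inner_comm _ _
      have e2 : ⟪H x Δ, Δ⟫ = ⟪Δ, H x Δ⟫ := real_inner_comm _ _
      rw [e1, e2]
      exact h1
  have := aux_taylor_one (fun s => L (x + s • Δ)) (fun s => ⟪gradient L (x + s • Δ), Δ⟫)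
    (fun s => ⟪H (x + s • Δ) Δ, Δ⟫) (aux_curve_deriv L hC2 x Δ) (aux_curve_deriv2 L H hH x Δ)
    hM
  simp only [zero_smul, add_zero, one_smul, hΔ] at this
  have hxx : x + (x' - x) = x' := by module
  rw [hxx] at this
  linarith

lemma aux_seg_lower (hC2 : ContDiff ℝ 2 L) (hH : ∀ x, HasFDerivAt (gradient L) (H x) x)
    {τ₀ : ℝ} (hτ₀ : 1 ≤ τ₀) {Θ₀ : Set (EuclideanSpace ℝ (Fin p))} (hconv : Convex ℝ Θ₀)
    (hPSD : ∀ θ ∈ Θ₀, ∀ u : EuclideanSpace ℝ (Fin p), 0 ≤ ⟪H θ u, u⟫)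
    (hstab : ∀ θ₁ ∈ Θ₀, ∀ θ₂ ∈ Θ₀,
      ⟪θ₁ - θ₂, H θ₂ (θ₁ - θ₂)⟫ ≤ τ₀ * ⟪θ₁ - θ₂, H θ₁ (θ₁ - θ₂)⟫)
    (x x' : EuclideanSpace ℝ (Fin p)) (hx : x ∈ Θ₀) (hx' : x' ∈ Θ₀) :
    L x + ⟪gradient L x, x' - x⟫ + ⟪H x (x' - x), x' - x⟫ / (2 * τ₀) ≤ L x' := by
  have hτpos : (0:ℝ) < τ₀ := lt_of_lt_of_le one_pos hτ₀
  set Δ := x' - x with hΔ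
  have hmem : ∀ t ∈ Set.Icc (0:ℝ) 1, x + t • Δ ∈ Θ₀ := by
    intro t ht
    have := hconv hx hx' (by linarith [ht.2] : (0:ℝ) ≤ 1 - t) ht.1 (by ring)
    convert this using 1
    simp only [hΔ, smul_sub]
    module
  have hM : ∀ t ∈ Set.Icc (0:ℝ) 1,
      -⟪H (x + t • Δ) Δ, Δ⟫ ≤ -(⟪H x Δ, Δ⟫ / τ₀) := by
    intro t ht
    rw [neg_le_neg_iff]
    rcases eq_or_lt_of_le ht.1 with h0 | h0
    · have := hPSD x hx Δ
      rw [← h0]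
      simp only [zero_smul, add_zero]
      rw [div_le_iff₀ hτpos]
      nlinarith
    · have hs := hstab (x + t • Δ) (hmem t ht) x hx
      have he : (x + t • Δ) - x = t • Δ := by module
      rw [he] at hs
      simp only [map_smul, real_inner_smul_left, real_inner_smul_right, smul_smul] at hs
      have ht2 : (0:ℝ) < t * t := mul_pos h0 h0
      have h1 : ⟪Δ, H x Δ⟫ ≤ τ₀ * ⟪Δ, H (x + t • Δ) Δ⟫ := by nlinarith
      have e1 : ⟪H (x + t • Δ) Δ, Δ⟫ = ⟪Δ, H (x + t • Δ) Δ⟫ := real_inner_comm _ _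
      have e2 : ⟪H x Δ, Δ⟫ = ⟪Δ, H x Δ⟫ := real_inner_comm _ _
      rw [div_le_iff₀ hτpos, e1, e2, mul_comm]
      exact h1
  have := aux_taylor_one (fun s => -L (x + s • Δ)) (fun s => -⟪gradient L (x + s • Δ), Δ⟫)
    (fun s => -⟪H (x + s • Δ) Δ, Δ⟫)
    (fun t => (aux_curve_deriv L hC2 x Δ t).neg) (fun t => (aux_curve_deriv2 L H hH x Δ t).neg)
    hM
  simp only [zero_smul, add_zero, one_smul, hΔ] at this
  have hxx : x + (x' - x) = x' := by module
  rw [hxx] at this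
  have h2 : -(⟪H x Δ, Δ⟫ / τ₀) / 2 = -(⟪H x Δ, Δ⟫ / (2 * τ₀)) := by
    ring
  rw [hΔ] at h2 ⊢
  linarith [this, h2.le, h2.ge]

end Aux


set_option maxHeartbeats 1000000 in
/-- deterministic core of Proposition 2: global linear decrease of the
suboptimality gap for the damped noisy Newton method under `τ₀`-Hessian stability. -/
theorem stmt_16 {p : ℕ} (L : EuclideanSpace ℝ (Fin p) → ℝ) (B Bbar τ₀ η ε : ℝ) (K : ℕ)
    (hC2 : ContDiff ℝ 2 L)
    (H : EuclideanSpace ℝ (Fin p) → (EuclideanSpace ℝ (Fin p) →L[ℝ] EuclideanSpace ℝ (Fin p)))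
    (hH : ∀ x, HasFDerivAt (gradient L) (H x) x)
    (hgrad : ∀ x : EuclideanSpace ℝ (Fin p), ‖gradient L x‖ ≤ B)
    (hHess : ∀ x : EuclideanSpace ℝ (Fin p), ‖H x‖ ≤ Bbar)
    (θhat : EuclideanSpace ℝ (Fin p)) (hmin : ∀ θ, L θhat ≤ L θ)
    (Θ₀ : Set (EuclideanSpace ℝ (Fin p))) (hconv : Convex ℝ Θ₀) (hhat : θhat ∈ Θ₀)
    (hPD : ∀ θ ∈ Θ₀, ∀ u : EuclideanSpace ℝ (Fin p), u ≠ 0 → 0 < ⟪u, H θ u⟫)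
    (hτ₀ : 1 ≤ τ₀)
    (hstab : ∀ θ₁ ∈ Θ₀, ∀ θ₂ ∈ Θ₀,
      ⟪θ₁ - θ₂, H θ₂ (θ₁ - θ₂)⟫ ≤ τ₀ * ⟪θ₁ - θ₂, H θ₁ (θ₁ - θ₂)⟫)
    (hη : 0 < η) (hηle : η ≤ 1 / (2 * τ₀)) (hε : 0 ≤ ε)
    (θ N : ℕ → EuclideanSpace ℝ (Fin p))
    (hrec : ∀ k < K,
      θ (k + 1) = θ k - η • Ring.inverse (H (θ k)) (gradient L (θ k)) + η • N k)
    (hN : ∀ k < K, ‖N k‖ ≤ ε)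
    (hin : ∀ k ≤ K, θ k ∈ Θ₀) :
    L (θ K) - L θhat ≤
      (1 - η / τ₀) ^ K * (L (θ 0) - L θhat) +
        (τ₀ / η) * (η * B * ε + η ^ 2 * Bbar * τ₀ * ε ^ 2) := by
  have hτpos : (0:ℝ) < τ₀ := lt_of_lt_of_le one_pos hτ₀
  have hB : 0 ≤ B := le_trans (norm_nonneg _) (hgrad θhat)
  have hBbar : 0 ≤ Bbar := le_trans (norm_nonneg _) (hHess θhat)
  have hPSD : ∀ θ' ∈ Θ₀, ∀ u : EuclideanSpace ℝ (Fin p), 0 ≤ ⟪H θ' u, u⟫ := by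
    intro θ' hθ' u
    rcases eq_or_ne u 0 with rfl | hu
    · simp
    · rw [real_inner_comm]; exact (hPD θ' hθ' u hu).le
  have hsymm := aux_hess_symm L H hC2 hH
  have h2τη : η * (2 * τ₀) ≤ 1 := (le_div_iff₀ (by positivity)).mp hηle
  set c : ℝ := η * B * ε + η ^ 2 * Bbar * τ₀ * ε ^ 2 with hcdef
  set r : ℝ := 1 - η / τ₀ with hrdef
  have step : ∀ k, k < K → L (θ (k + 1)) - L θhat ≤ r * (L (θ k) - L θhat) + c := by
    intro k hk
    have hxin : θ k ∈ Θ₀ := hin k hk.le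
    have hx'in : θ (k + 1) ∈ Θ₀ := hin (k + 1) hk
    set v := Ring.inverse (H (θ k)) (gradient L (θ k)) with hvdef
    have hinj : Function.Injective (H (θ k)) := by
      intro a b hab
      by_contra hne
      have hsub : a - b ≠ 0 := sub_ne_zero.mpr hne
      have h0 : H (θ k) (a - b) = 0 := by rw [map_sub, hab, sub_self]
      have := hPD _ hxin (a - b) hsub
      rw [h0] at this
      simp at this
    have hAv : H (θ k) v = gradient L (θ k) := by
      have hu : IsUnit (H (θ k)) := aux_isUnit_of_inj (H (θ k)) hinj
      have hmi := Ring.mul_inverse_cancel (H (θ k)) hu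
      calc H (θ k) v = (H (θ k) * Ring.inverse (H (θ k))) (gradient L (θ k)) := rfl
      _ = gradient L (θ k) := by rw [hmi]; simp
    have hΔ : θ (k + 1) - θ k = η • (N k - v) := by rw [hrec k hk]; module
    have hqnn : 0 ≤ ⟪H (θ k) v, v⟫ := hPSD _ hxin v
    -- gap bound
    have hgap2 : 2 * (L (θ k) - L θhat) ≤ τ₀ * ⟪H (θ k) v, v⟫ := by
      have hlow := aux_seg_lower L H hC2 hH hτ₀ hconv hPSD hstab (θ k) θhat hxin hhat
      have hcomb : 0 ≤ ⟪H (θ k) (τ₀ • v + (θhat - θ k)), τ₀ • v + (θhat - θ k)⟫ :=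
        hPSD _ hxin _
      have hexp : ⟪H (θ k) (τ₀ • v + (θhat - θ k)), τ₀ • v + (θhat - θ k)⟫ =
          τ₀ ^ 2 * ⟪H (θ k) v, v⟫ + 2 * τ₀ * ⟪H (θ k) v, θhat - θ k⟫ +
            ⟪H (θ k) (θhat - θ k), θhat - θ k⟫ := by
        simp only [map_add, map_smul, inner_add_left, inner_add_right,
          real_inner_smul_left, real_inner_smul_right]
        rw [hsymm (θ k) (θhat - θ k) v]
        ring
      rw [hexp] at hcomb
      have hglow : ⟪gradient L (θ k), θhat - θ k⟫ = ⟪H (θ k) v, θhat - θ k⟫ := by rw [hAv]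
      rw [hglow] at hlow
      have i2 : ⟪H (θ k) (θhat - θ k), θhat - θ k⟫ ≤
          2 * τ₀ * (L θhat - L (θ k) - ⟪H (θ k) v, θhat - θ k⟫) := by
        have h1 : ⟪H (θ k) (θhat - θ k), θhat - θ k⟫ / (2 * τ₀) ≤
            L θhat - L (θ k) - ⟪H (θ k) v, θhat - θ k⟫ := by linarith
        calc ⟪H (θ k) (θhat - θ k), θhat - θ k⟫
            = (2 * τ₀) * (⟪H (θ k) (θhat - θ k), θhat - θ k⟫ / (2 * τ₀)) := by field_simp
        _ ≤ (2 * τ₀) * (L θhat - L (θ k) - ⟪H (θ k) v, θhat - θ k⟫) := by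
            apply mul_le_mul_of_nonneg_left h1; positivity
      have hτgap : 2 * τ₀ * (L (θ k) - L θhat) ≤ τ₀ ^ 2 * ⟪H (θ k) v, v⟫ := by nlinarith
      nlinarith [hτpos, mul_pos hτpos hτpos]
    -- upper bound on one step
    have hup := aux_seg_upper L H hC2 hH hτ₀ hconv hPSD hstab (θ k) (θ (k + 1)) hxin hx'in
    rw [hΔ] at hup
    have hgv : ⟪gradient L (θ k), v⟫ = ⟪H (θ k) v, v⟫ := by rw [hAv]
    have hexp3 : ⟪gradient L (θ k), η • (N k - v)⟫ =
        η * (⟪gradient L (θ k), N k⟫ - ⟪H (θ k) v, v⟫) := by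
      simp only [inner_sub_right, real_inner_smul_right]
      rw [hgv]
    have hexp2 : ⟪H (θ k) (η • (N k - v)), η • (N k - v)⟫ =
        η ^ 2 * (⟪H (θ k) (N k), N k⟫ - 2 * ⟪H (θ k) v, N k⟫ + ⟪H (θ k) v, v⟫) := by
      simp only [map_smul, map_sub, inner_sub_left, inner_sub_right,
        real_inner_smul_left, real_inner_smul_right]
      rw [hsymm (θ k) (N k) v]
      ring
    rw [hexp3, hexp2] at hup
    have hcomb2 : 0 ≤ ⟪H (θ k) (N k + v), N k + v⟫ := hPSD _ hxin _
    have hexp4 : ⟪H (θ k) (N k + v), N k + v⟫ =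
        ⟪H (θ k) (N k), N k⟫ + 2 * ⟪H (θ k) v, N k⟫ + ⟪H (θ k) v, v⟫ := by
      simp only [map_add, inner_add_left, inner_add_right]
      rw [hsymm (θ k) (N k) v]
      ring
    rw [hexp4] at hcomb2
    have hAn : ⟪H (θ k) (N k), N k⟫ ≤ Bbar * ε ^ 2 := by
      have h4 := hN k hk
      calc ⟪H (θ k) (N k), N k⟫ ≤ ‖H (θ k) (N k)‖ * ‖N k‖ := real_inner_le_norm _ _
      _ ≤ (‖H (θ k)‖ * ‖N k‖) * ‖N k‖ :=
          mul_le_mul_of_nonneg_right ((H (θ k)).le_opNorm (N k)) (norm_nonneg _)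
      _ ≤ (Bbar * ε) * ε := by
          apply mul_le_mul _ h4 (norm_nonneg _) (mul_nonneg hBbar hε)
          exact mul_le_mul (hHess (θ k)) h4 (norm_nonneg _) hBbar
      _ = Bbar * ε ^ 2 := by ring
    have hgn : ⟪gradient L (θ k), N k⟫ ≤ B * ε := by
      calc ⟪gradient L (θ k), N k⟫ ≤ ‖gradient L (θ k)‖ * ‖N k‖ := real_inner_le_norm _ _
      _ ≤ B * ε := mul_le_mul (hgrad _) (hN k hk) (norm_nonneg _) hB
    -- combine, multiplied by τ₀
    have P1 := mul_le_mul_of_nonneg_left hup hτpos.le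
    have P2 : 0 ≤ (τ₀ ^ 2 * η ^ 2 / 2) *
        (⟪H (θ k) (N k), N k⟫ + 2 * ⟪H (θ k) v, N k⟫ + ⟪H (θ k) v, v⟫) :=
      mul_nonneg (by positivity) hcomb2
    have P3 : τ₀ * η * ⟪gradient L (θ k), N k⟫ ≤ τ₀ * η * (B * ε) :=
      mul_le_mul_of_nonneg_left hgn (by positivity)
    have P4 : τ₀ ^ 2 * η ^ 2 * ⟪H (θ k) (N k), N k⟫ ≤ τ₀ ^ 2 * η ^ 2 * (Bbar * ε ^ 2) :=
      mul_le_mul_of_nonneg_left hAn (by positivity)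
    have P5 : η * (2 * (L (θ k) - L θhat)) ≤ η * (τ₀ * ⟪H (θ k) v, v⟫) :=
      mul_le_mul_of_nonneg_left hgap2 hη.le
    have P6 : 0 ≤ η * τ₀ * ⟪H (θ k) v, v⟫ * (1 - η * (2 * τ₀)) :=
      mul_nonneg (mul_nonneg (mul_nonneg hη.le hτpos.le) hqnn) (by linarith)
    have hτkey : τ₀ * (L (θ (k + 1)) - L θhat) ≤
        (τ₀ - η) * (L (θ k) - L θhat) + τ₀ * c := by
      rw [hcdef]
      nlinarith [P1, P2, P3, P4, P5, P6]
    have heq : r * (L (θ k) - L θhat) + c =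
        ((τ₀ - η) * (L (θ k) - L θhat) + τ₀ * c) / τ₀ := by
      rw [hrdef]; field_simp
    rw [heq, le_div_iff₀ hτpos]
    linarith [hτkey]
  -- induction
  have hc0 : 0 ≤ c := by
    rw [hcdef]
    have h1 : 0 ≤ η * B * ε := mul_nonneg (mul_nonneg hη.le hB) hε
    have h2 : 0 ≤ η ^ 2 * Bbar * τ₀ * ε ^ 2 := by positivity
    linarith
  have hS : 0 ≤ τ₀ / η * c := mul_nonneg (by positivity) hc0
  have hr0 : 0 ≤ r := by
    rw [hrdef, sub_nonneg, div_le_one hτpos]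
    nlinarith [h2τη, hτ₀, hτpos]
  have hSc : r * (τ₀ / η * c) + c = τ₀ / η * c := by
    rw [hrdef]; field_simp; ring
  have main : ∀ k, k ≤ K →
      L (θ k) - L θhat ≤ r ^ k * (L (θ 0) - L θhat) + τ₀ / η * c := by
    intro k
    induction k with
    | zero => intro _; simp only [pow_zero, one_mul]; linarith
    | succ k ih =>
      intro hk1
      have hk : k < K := hk1
      calc L (θ (k + 1)) - L θhat ≤ r * (L (θ k) - L θhat) + c := step k hk
      _ ≤ r * (r ^ k * (L (θ 0) - L θhat) + τ₀ / η * c) + c := by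
          have h2 := mul_le_mul_of_nonneg_left (ih hk.le) hr0
          linarith
      _ = r ^ (k + 1) * (L (θ 0) - L θhat) + (r * (τ₀ / η * c) + c) := by ring
      _ = r ^ (k + 1) * (L (θ 0) - L θhat) + τ₀ / η * c := by rw [hSc]
  have := main K le_rfl
  linarith
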